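/- Euler's two-parameter minimisation (E692 §§6–8): let a, c > 0. For all s > 0 and all φ with 0 < φ < π, one has (a² + c²·s² − 2·a·c·s·cos φ)/(s·sin³ φ) ≥ 8·a·c/(3·√3), with equality if and only if s = a/c and φ = π/3. -/

import Mathlib

set_option maxHeartbeats 800000


/-- E692 §§6–8: Euler's two-parameter minimisation. For `a, c > 0`, `s > 0` and
`0 < φ < π`, one has `(a² + c²s² − 2acs·cos φ)/(s·sin³φ) ≥ 8ac/(3√3)`, with
equality iff `s = a/c` and `φ = π/3`. -/
theorem euler_two_parameter_minimisation (a c : ℝ) (ha : 0 < a) (hc : 0 < c) :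
    ∀ s φ : ℝ, 0 < s → 0 < φ → φ < Real.pi →
      8 * a * c / (3 * Real.sqrt 3) ≤
        (a ^ 2 + c ^ 2 * s ^ 2 - 2 * a * c * s * Real.cos φ) / (s * Real.sin φ ^ 3) ∧
      ((a ^ 2 + c ^ 2 * s ^ 2 - 2 * a * c * s * Real.cos φ) / (s * Real.sin φ ^ 3)
          = 8 * a * c / (3 * Real.sqrt 3) ↔ s = a / c ∧ φ = Real.pi / 3) := by
  intro s φ hs hφ0 hφπ
  have s3 : (0:ℝ) < Real.sqrt 3 := Real.sqrt_pos.mpr (by norm_num)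
  have s3sq : Real.sqrt 3 ^ 2 = 3 := Real.sq_sqrt (by norm_num)
  set t := Real.cos φ with htdef
  set u := Real.sin φ with hudef
  have hu : 0 < u := Real.sin_pos_of_pos_of_lt_pi hφ0 hφπ
  have pyth : u ^ 2 = 1 - t ^ 2 := by
    have := Real.sin_sq_add_cos_sq φ; linarith
  have ht1 : t < 1 := by nlinarith [mul_pos hu hu, sq_nonneg (t - 1)]
  have ht2 : -1 < t := by nlinarith [mul_pos hu hu, sq_nonneg (t + 1)]
  have key : 4 * u * (1 + t) ≤ 3 * Real.sqrt 3 := by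
    have e : u ^ 2 * (1 + t) ^ 2 = (1 - t ^ 2) * (1 + t) ^ 2 := by rw [pyth]
    have hsq : (4 * u * (1 + t)) ^ 2 ≤ (3 * Real.sqrt 3) ^ 2 := by
      nlinarith [e, sq_nonneg ((2*t - 1) * (2*t + 3)), sq_nonneg (2*t - 1), s3sq]
    have h4 : 0 ≤ 4 * u * (1 + t) := by nlinarith
    calc 4 * u * (1 + t) = Real.sqrt ((4 * u * (1 + t)) ^ 2) := (Real.sqrt_sq h4).symm
      _ ≤ Real.sqrt ((3 * Real.sqrt 3) ^ 2) := Real.sqrt_le_sqrt hsq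
      _ = 3 * Real.sqrt 3 := Real.sqrt_sq (by positivity)
  have hD : 0 < s * u ^ 3 := by positivity
  have hu3 : u ^ 3 = u * (1 - t) * (1 + t) := by
    have : u ^ 3 = u * u ^ 2 := by ring
    rw [this, pyth]; ring
  have hN : 3 * Real.sqrt 3 * (a ^ 2 + c ^ 2 * s ^ 2 - 2 * a * c * s * t)
        - 8 * a * c * (s * u ^ 3)
      = 3 * Real.sqrt 3 * (a - c * s) ^ 2
        + 2 * a * c * s * (1 - t) * (3 * Real.sqrt 3 - 4 * u * (1 + t)) := by
    rw [hu3]; ring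
  have term1 : 0 ≤ 3 * Real.sqrt 3 * (a - c * s) ^ 2 := by positivity
  have term2 : 0 ≤ 2 * a * c * s * (1 - t) * (3 * Real.sqrt 3 - 4 * u * (1 + t)) := by
    apply mul_nonneg
    · have : (0:ℝ) < 2 * a * c * s * (1 - t) := by
        have h1t : 0 < 1 - t := by linarith
        positivity
      linarith
    · linarith
  have ineq1 : 8 * a * c * (s * u ^ 3)
      ≤ 3 * Real.sqrt 3 * (a ^ 2 + c ^ 2 * s ^ 2 - 2 * a * c * s * t) := by
    linarith [hN, term1, term2]
  constructor
  · rw [div_le_div_iff₀ (by positivity) hD]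
    nlinarith [ineq1]
  · constructor
    · intro heq
      have hNe : a ^ 2 + c ^ 2 * s ^ 2 - 2 * a * c * s * t
          = 8 * a * c / (3 * Real.sqrt 3) * (s * u ^ 3) := (div_eq_iff hD.ne').mp heq
      have h0 : 3 * Real.sqrt 3 * (a ^ 2 + c ^ 2 * s ^ 2 - 2 * a * c * s * t)
          = 8 * a * c * (s * u ^ 3) := by
        rw [hNe]; field_simp
      have hz : 3 * Real.sqrt 3 * (a - c * s) ^ 2
            + 2 * a * c * s * (1 - t) * (3 * Real.sqrt 3 - 4 * u * (1 + t)) = 0 := by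
        linarith [hN, h0]
      have hz1 : (a - c * s) ^ 2 = 0 := by nlinarith [term1, term2, hz]
      have hz2 : 3 * Real.sqrt 3 - 4 * u * (1 + t) = 0 := by
        have h2z : 2 * a * c * s * (1 - t) * (3 * Real.sqrt 3 - 4 * u * (1 + t)) = 0 := by
          nlinarith [term1, term2, hz]
        have hpos : (0:ℝ) < 2 * a * c * s * (1 - t) := by
          have h1t : 0 < 1 - t := by linarith
          positivity
        rcases mul_eq_zero.mp h2z with h | h
        · exact absurd h hpos.ne'
        · exact h
      have hseq : s = a / c := by
        have : a - c * s = 0 := by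
          have := sq_eq_zero_iff.mp hz1; exact this
        field_simp; linarith
      have h27 : (4 * u * (1 + t)) ^ 2 = 27 := by
        have : 4 * u * (1 + t) = 3 * Real.sqrt 3 := by linarith
        rw [this]; nlinarith [s3sq]
      have e : u ^ 2 * (1 + t) ^ 2 = (1 - t ^ 2) * (1 + t) ^ 2 := by rw [pyth]
      have h16 : 16 * (1 - t ^ 2) * (1 + t) ^ 2 = 27 := by
        linear_combination h27 - 16 * e
      have ht : t = 1 / 2 := by
        have hle : (2 * t - 1) ^ 2 ≤ 0 := by
          linarith [h16, sq_nonneg ((2*t - 1) * (2*t + 3))]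
        have h0' : (2 * t - 1) ^ 2 = 0 := le_antisymm hle (sq_nonneg _)
        have h1' : 2 * t - 1 = 0 := by
          exact pow_eq_zero_iff (by norm_num) |>.mp h0'
        linarith
      have hφ : φ = Real.pi / 3 := by
        have hmem1 : φ ∈ Set.Icc 0 Real.pi := ⟨hφ0.le, hφπ.le⟩
        have hmem2 : Real.pi / 3 ∈ Set.Icc 0 Real.pi := by
          constructor <;> nlinarith [Real.pi_pos]
        have hcos : Real.cos φ = Real.cos (Real.pi / 3) := by
          rw [Real.cos_pi_div_three, ← htdef, ht]
        exact Real.injOn_cos hmem1 hmem2 hcos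
      exact ⟨hseq, hφ⟩
    · rintro ⟨rfl, rfl⟩
      have hcosv : t = 1 / 2 := by rw [htdef, Real.cos_pi_div_three]
      have hsinv : u = Real.sqrt 3 / 2 := by rw [hudef, Real.sin_pi_div_three]
      rw [hcosv, hsinv]
      rw [div_eq_div_iff (by positivity) (by positivity)]
      field_simp
      linear_combination (-8) * s3sq
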